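/- Let (a_i)_{i≥0} be a sequence of nonnegative reals, and let θ ∈ [0,1), τ ≥ 0, C > 0, b ≥ 0 be constants such that for every i, if a_i > C²·b then a_{i+1} ≤ θ·a_i + τ·b. Then inf_{i} a_i ≤ max{C², τ/(1−θ)}·b. -/

import Mathlib

open scoped BigOperators

/-- Squared Frobenius norm of a real matrix. -/
noncomputable def frobSq {m n : ℕ} (X : Matrix (Fin m) (Fin n) ℝ) : ℝ :=
  ∑ i, ∑ j, (X i j) ^ 2

/-- Frobenius norm of a real matrix. -/
noncomputable def frobNorm {m n : ℕ} (X : Matrix (Fin m) (Fin n) ℝ) : ℝ :=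
  Real.sqrt (frobSq X)

/-- Frobenius inner product `⟨X, Y⟩ = tr(Xᵀ Y)`. -/
noncomputable def frobInner {m n : ℕ} (X Y : Matrix (Fin m) (Fin n) ℝ) : ℝ :=
  ∑ i, ∑ j, X i j * Y i j

/-- Squared Euclidean norm on `ℝ^p`. -/
noncomputable def vecNormSq {p : ℕ} (v : Fin p → ℝ) : ℝ := ∑ i, (v i) ^ 2

/-- Euclidean norm on `ℝ^p`. -/
noncomputable def vecNorm {p : ℕ} (v : Fin p → ℝ) : ℝ := Real.sqrt (vecNormSq v)

/-- Euclidean inner product on `ℝ^p`. -/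
noncomputable def dotp {p : ℕ} (v w : Fin p → ℝ) : ℝ := ∑ i, v i * w i

/-- Rank restricted isometry property (R-RIP) at rank `s` with constant `δ`. -/
def RIP {m n p : ℕ} (A : Matrix (Fin m) (Fin n) ℝ →ₗ[ℝ] (Fin p → ℝ)) (s : ℕ) (δ : ℝ) : Prop :=
  ∀ X : Matrix (Fin m) (Fin n) ℝ, X.rank ≤ s →
    (1 - δ) * frobSq X ≤ vecNormSq (A X) ∧ vecNormSq (A X) ≤ (1 + δ) * frobSq X

/-- The data error `f(X) = ‖y - 𝒜 X‖₂²`. -/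
noncomputable def dataErr {m n p : ℕ} (A : Matrix (Fin m) (Fin n) ℝ →ₗ[ℝ] (Fin p → ℝ))
    (y : Fin p → ℝ) (X : Matrix (Fin m) (Fin n) ℝ) : ℝ :=
  vecNormSq (y - A X)

/-- `Aadj` is the adjoint of `A` with respect to the Frobenius and Euclidean inner products. -/
def IsAdjoint {m n p : ℕ} (A : Matrix (Fin m) (Fin n) ℝ →ₗ[ℝ] (Fin p → ℝ))
    (Aadj : (Fin p → ℝ) →ₗ[ℝ] Matrix (Fin m) (Fin n) ℝ) : Prop :=
  ∀ (z : Fin p → ℝ) (X : Matrix (Fin m) (Fin n) ℝ), frobInner (Aadj z) X = dotp z (A X)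

/-- The gradient `∇f(X) = 2 𝒜*(𝒜 X - y)` of the data error. -/
noncomputable def gradErr {m n p : ℕ} (A : Matrix (Fin m) (Fin n) ℝ →ₗ[ℝ] (Fin p → ℝ))
    (Aadj : (Fin p → ℝ) →ₗ[ℝ] Matrix (Fin m) (Fin n) ℝ) (y : Fin p → ℝ)
    (X : Matrix (Fin m) (Fin n) ℝ) : Matrix (Fin m) (Fin n) ℝ :=
  (2 : ℝ) • Aadj (A X - y)

/-- Deterministic contraction argument.  If `(a_i)` is a nonnegative real
sequence, `θ ∈ [0,1)`, `τ ≥ 0`, `C > 0`, `b ≥ 0`, and `a_i > C² b → a_{i+1} ≤ θ a_i + τ b`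
for every `i`, then `inf_i a_i ≤ max {C², τ/(1-θ)} · b`. -/
theorem stmt13 (a : ℕ → ℝ) (θ τ C b : ℝ) (ha : ∀ i, 0 ≤ a i)
    (hθ0 : 0 ≤ θ) (hθ1 : θ < 1) (hτ : 0 ≤ τ) (hC : 0 < C) (hb : 0 ≤ b)
    (hrec : ∀ i, a i > C ^ 2 * b → a (i + 1) ≤ θ * a i + τ * b) :
    (⨅ i, a i) ≤ max (C ^ 2) (τ / (1 - θ)) * b := by
  by_contra h
  push_neg at h
  set K := max (C ^ 2) (τ / (1 - θ)) * b with hK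
  have hbdd : BddBelow (Set.range a) := ⟨0, by rintro x ⟨i, rfl⟩; exact ha i⟩
  have hlow : ∀ i, K < a i := fun i => lt_of_lt_of_le h (ciInf_le hbdd i)
  have h1θ : 0 < 1 - θ := by linarith
  set L := τ * b / (1 - θ) with hL
  have hKL : L ≤ K := by
    have : τ / (1 - θ) * b ≤ K := mul_le_mul_of_nonneg_right (le_max_right _ _) hb
    rw [hL]; rw [div_mul_eq_mul_div] at this; exact this
  have hCb : ∀ i, C ^ 2 * b < a i := by
    intro i
    have : C ^ 2 * b ≤ K := mul_le_mul_of_nonneg_right (le_max_left _ _) hb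
    exact lt_of_le_of_lt this (hlow i)
  have hstep : ∀ i, a (i + 1) - L ≤ θ * (a i - L) := by
    intro i
    have := hrec i (hCb i)
    have hLe : θ * L + τ * b = L := by
      rw [hL, div_eq_mul_inv]
      have h1 := mul_inv_cancel₀ (ne_of_gt h1θ)
      linear_combination (-(τ * b)) * h1
    nlinarith
  have hgeo : ∀ n, a n - L ≤ θ ^ n * (a 0 - L) := by
    intro n
    induction n with
    | zero => simp
    | succ n ih =>
      calc a (n + 1) - L ≤ θ * (a n - L) := hstep n
        _ ≤ θ * (θ ^ n * (a 0 - L)) := by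
            apply mul_le_mul_of_nonneg_left ih hθ0
        _ = θ ^ (n + 1) * (a 0 - L) := by ring
  set c := (⨅ i, a i) - L with hc
  have hc0 : 0 < c := by
    have : L ≤ K := hKL
    simp only [hc]; linarith
  have hcn : ∀ n, c ≤ a n - L := fun n => by
    have := ciInf_le hbdd n; simp only [hc]; linarith
  have hg0 : 0 < a 0 - L := lt_of_lt_of_le hc0 (hcn 0)
  obtain ⟨n, hn⟩ := exists_pow_lt_of_lt_one (div_pos hc0 hg0) hθ1
  have : θ ^ n * (a 0 - L) < c := by
    have := mul_lt_mul_of_pos_right hn hg0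
    rwa [div_mul_cancel₀ _ (ne_of_gt hg0)] at this
  exact absurd (le_trans (hcn n) (hgeo n)) (not_le.mpr this)
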